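/- The number of parking functions of size n whose parking permutation avoids both 132 and 231 equals (n+1)!/2. -/

import Mathlib

open Finset

noncomputable section

/-- The parking process over the first `k` cars (cars are `0,...,k-1`, i.e. cars `1,...,k`
in 1-indexed terms): returns `some occ` where `occ` maps each spot to the car parked there
(`none` meaning empty), or `none` if some car failed to park.  Car `c` drives to its
preferred spot `f c` and parks at the first free spot with index `≥ f c`, failing if
no such spot exists. -/
def parkAux {n : ℕ} (f : Fin n → Fin n) : ℕ → Option (Fin n → Option (Fin n))
  | 0 => some fun _ => none
  | k + 1 =>
    (parkAux f k).bind fun occ =>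
      if h : k < n then
        if hS : (Finset.univ.filter fun s => f ⟨k, h⟩ ≤ s ∧ occ s = none).Nonempty then
          some (Function.update occ
            ((Finset.univ.filter fun s => f ⟨k, h⟩ ≤ s ∧ occ s = none).min' hS)
            (some ⟨k, h⟩))
        else none
      else some occ

/-- All `n` cars park successfully. -/
def AllPark {n : ℕ} (f : Fin n → Fin n) : Prop := (parkAux f n).isSome

/-- `f` is a parking function: for every `i ∈ [n]`, at least `i` cars prefer
the first `i` spots.  (Here `i : Fin n` denotes the `(i+1)`-st spot, 0-indexed.) -/
def IsParkingFunction {n : ℕ} (f : Fin n → Fin n) : Prop :=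
  ∀ i : Fin n, i.val + 1 ≤ (Finset.univ.filter fun j => f j ≤ i).card

/-- `ρ` is the parking permutation of `f`: after all cars have parked,
spot `i` is occupied by car `ρ i`. -/
def IsParkingPerm {n : ℕ} (f : Fin n → Fin n) (ρ : Equiv.Perm (Fin n)) : Prop :=
  parkAux f n = some fun i => some (ρ i)

/-- `π` contains `σ` as a pattern. -/
def ContainsPattern {n m : ℕ} (π : Equiv.Perm (Fin n)) (σ : Equiv.Perm (Fin m)) : Prop :=
  ∃ g : Fin m → Fin n, StrictMono g ∧ ∀ a b : Fin m, σ a < σ b ↔ π (g a) < π (g b)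

/-- `ρ` avoids every pattern in the list `pats`. -/
def AvoidsAll {n : ℕ} (ρ : Equiv.Perm (Fin n)) (pats : List (Equiv.Perm (Fin 3))) : Prop :=
  ∀ σ ∈ pats, ¬ ContainsPattern ρ σ

/-- The number of parking functions of size `n` whose parking permutation avoids
all patterns in `pats`. -/
def pk (n : ℕ) (pats : List (Equiv.Perm (Fin 3))) : ℕ :=
  Nat.card {f : Fin n → Fin n // IsParkingFunction f ∧
    ∃ ρ : Equiv.Perm (Fin n), IsParkingPerm f ρ ∧ AvoidsAll ρ pats}

def p123 : Equiv.Perm (Fin 3) := Equiv.ofBijective ![0, 1, 2] (by decide)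
def p132 : Equiv.Perm (Fin 3) := Equiv.ofBijective ![0, 2, 1] (by decide)
def p213 : Equiv.Perm (Fin 3) := Equiv.ofBijective ![1, 0, 2] (by decide)
def p231 : Equiv.Perm (Fin 3) := Equiv.ofBijective ![1, 2, 0] (by decide)
def p312 : Equiv.Perm (Fin 3) := Equiv.ofBijective ![2, 0, 1] (by decide)
def p321 : Equiv.Perm (Fin 3) := Equiv.ofBijective ![2, 1, 0] (by decide)


namespace PF
variable {n : ℕ}

lemma parkAux_succ (f : Fin n → Fin n) (k : ℕ) :
    parkAux f (k+1) = (parkAux f k).bind fun occ =>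
      if h : k < n then
        if hS : (Finset.univ.filter fun s => f ⟨k, h⟩ ≤ s ∧ occ s = none).Nonempty then
          some (Function.update occ
            ((Finset.univ.filter fun s => f ⟨k, h⟩ ≤ s ∧ occ s = none).min' hS)
            (some ⟨k, h⟩))
        else none
      else some occ := rfl

lemma parkAux_none_mono (f : Fin n → Fin n) {k m : ℕ} (hk : parkAux f k = none)
    (h : k ≤ m) : parkAux f m = none := by
  induction m with
  | zero => have : k = 0 := by omega
            subst this; exact hk
  | succ m ih =>
    rcases Nat.lt_or_ge k (m+1) with h' | h'
    · have := ih (by omega)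
      rw [parkAux_succ, this]; rfl
    · have : k = m + 1 := by omega
      rwa [← this]

lemma parkAux_isSome_of_le (f : Fin n → Fin n) {k m : ℕ} (h : k ≤ m)
    (hm : (parkAux f m).isSome) : (parkAux f k).isSome := by
  by_contra hk
  rw [Option.not_isSome_iff_eq_none] at hk
  rw [parkAux_none_mono f hk h] at hm; simp at hm


lemma card_val_lt {k : ℕ} (hk : k ≤ n) :
    (Finset.univ.filter fun c : Fin n => c.val < k).card = k := by
  induction k with
  | zero => simp
  | succ k ih =>
    have hins : (Finset.univ.filter fun c : Fin n => c.val < k + 1)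
        = insert (⟨k, hk⟩ : Fin n) (Finset.univ.filter fun c : Fin n => c.val < k) := by
      ext c; simp only [Finset.mem_filter, Finset.mem_insert, Finset.mem_univ, true_and]
      constructor
      · intro h
        rcases Nat.lt_or_ge c.val k with h' | h'
        · exact Or.inr h'
        · left; apply Fin.ext; simpa using by omega
      · rintro (rfl | h)
        · simp
        · omega
    rw [hins, Finset.card_insert_of_notMem (by simp), ih (by omega)]

lemma card_rho_lt (ρ : Equiv.Perm (Fin n)) {k : ℕ} (hk : k ≤ n) :
    (Finset.univ.filter fun s : Fin n => (ρ s).val < k).card = k := by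
  have h2 : (Finset.univ.filter fun s : Fin n => (ρ s).val < k).card
      = (Finset.univ.filter fun c : Fin n => c.val < k).card := by
    apply Finset.card_bij (fun s _ => ρ s)
    · intro a ha; simp at ha ⊢; exact ha
    · intro a _ b _ h; exact ρ.injective h
    · intro b hb; exact ⟨ρ.symm b, by simpa using hb, by simp⟩
  rw [h2, card_val_lt hk]

/-- extraction of a successful step -/
lemma parkAux_step {f : Fin n → Fin n} {k : ℕ} (h : k < n) {occ'}
    (h' : parkAux f (k+1) = some occ') :
    ∃ occ, parkAux f k = some occ ∧
      ∃ hS : (Finset.univ.filter fun s => f ⟨k, h⟩ ≤ s ∧ occ s = none).Nonempty,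
      occ' = Function.update occ
        ((Finset.univ.filter fun s => f ⟨k, h⟩ ≤ s ∧ occ s = none).min' hS)
        (some ⟨k, h⟩) := by
  rw [parkAux_succ] at h'
  rcases hk : parkAux f k with _ | occ
  · rw [hk] at h'; simp at h'
  · rw [hk] at h'
    simp only [Option.bind_some, dif_pos h] at h'
    by_cases hS : (Finset.univ.filter fun s => f ⟨k, h⟩ ≤ s ∧ occ s = none).Nonempty
    · rw [dif_pos hS] at h'
      exact ⟨occ, rfl, hS, by simpa using h'.symm⟩
    · rw [dif_neg hS] at h'; simp at h'

/-- car bound invariant -/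
lemma car_lt {f : Fin n → Fin n} : ∀ {k : ℕ} {occ}, parkAux f k = some occ →
    ∀ s c, occ s = some c → c.val < k := by
  intro k
  induction k with
  | zero => intro occ h s c hc
            simp only [parkAux] at h
            obtain rfl := Option.some_injective _ h.symm  -- occ = fun _ => none
            simp at hc
  | succ k ih =>
    intro occ' h' s c hc
    rcases Nat.lt_or_ge k n with hkn | hkn
    · obtain ⟨occ, hk, hS, rfl⟩ := parkAux_step hkn h'
      rcases eq_or_ne s ((Finset.univ.filter fun s => f ⟨k, hkn⟩ ≤ s ∧ occ s = none).min' hS) with rfl | hne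
      · rw [Function.update_self] at hc
        obtain rfl := Option.some_injective _ hc.symm; simp
      · rw [Function.update_of_ne hne] at hc
        exact Nat.lt_succ_of_lt (ih hk s c hc)
    · rw [parkAux_succ] at h'
      rcases hk : parkAux f k with _ | occ
      · rw [hk] at h'; simp at h'
      · rw [hk] at h'
        simp only [Option.bind_some, dif_neg (by omega : ¬ k < n)] at h'
        obtain rfl := Option.some_injective _ h'
        exact Nat.lt_succ_of_lt (ih hk s c hc)


/-- monotonicity: parked cars stay -/
lemma occ_mono {f : Fin n → Fin n} : ∀ {m k : ℕ}, k ≤ m → ∀ {occ occ'},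
    parkAux f k = some occ → parkAux f m = some occ' →
    ∀ s c, occ s = some c → occ' s = some c := by
  intro m
  induction m with
  | zero => intro k hk occ occ' h h' s c hc
            have : k = 0 := by omega
            subst this; rw [h] at h'; obtain rfl := Option.some_injective _ h'; exact hc
  | succ m ih =>
    intro k hk occ occ' h h' s c hc
    rcases Nat.lt_or_ge k (m+1) with hkm | hkm
    · rcases Nat.lt_or_ge m n with hmn | hmn
      · obtain ⟨occ1, hm, hS, rfl⟩ := parkAux_step hmn h'
        have h1 := ih (by omega) h hm s c hc
        have hmin := (Finset.univ.filter fun s => f ⟨m, hmn⟩ ≤ s ∧ occ1 s = none).min'_mem hS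
        rw [Finset.mem_filter] at hmin
        have hne : s ≠ (Finset.univ.filter fun s => f ⟨m, hmn⟩ ≤ s ∧ occ1 s = none).min' hS := by
          intro rfl'
          rw [← rfl'] at hmin
          rw [hmin.2.2] at h1; simp at h1
        rw [Function.update_of_ne hne]; exact h1
      · rw [parkAux_succ] at h'
        rcases hm : parkAux f m with _ | occ1
        · rw [hm] at h'; simp at h'
        · rw [hm] at h'
          simp only [Option.bind_some, dif_neg (by omega : ¬ m < n)] at h'
          obtain rfl := Option.some_injective _ h'
          exact ih (by omega) h hm s c hc
    · have : k = m + 1 := by omega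
      subst this; rw [h] at h'; obtain rfl := Option.some_injective _ h'; exact hc

/-- number of occupied spots after k steps is k -/
lemma occ_card {f : Fin n → Fin n} : ∀ {k : ℕ} {occ}, parkAux f k = some occ →
    k ≤ n →
    (Finset.univ.filter fun s => (occ s).isSome).card = k := by
  intro k
  induction k with
  | zero => intro occ h _
            simp only [parkAux] at h
            obtain rfl := Option.some_injective _ h.symm
            simp
  | succ k ih =>
    intro occ' h' hkn
    obtain ⟨occ, hk, hS, rfl⟩ := parkAux_step (by omega) h'
    set t := (Finset.univ.filter fun s => f ⟨k, by omega⟩ ≤ s ∧ occ s = none).min' hS with ht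
    have hmin := (Finset.univ.filter fun s => f ⟨k, by omega⟩ ≤ s ∧ occ s = none).min'_mem hS
    rw [Finset.mem_filter] at hmin
    have : (Finset.univ.filter fun s => ((Function.update occ t (some ⟨k, by omega⟩)) s).isSome)
        = insert t (Finset.univ.filter fun s => (occ s).isSome) := by
      ext s
      rcases eq_or_ne s t with rfl | hne
      · simp [Function.update_self]
      · simp [Function.update_of_ne hne, hne]
    rw [this, Finset.card_insert_of_notMem (by simp [ht, hmin.2.2]), ih hk (by omega)]

/-- characterization of intermediate states from the final one -/
lemma occ_char {f : Fin n → Fin n} {ρ : Equiv.Perm (Fin n)}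
    (hρ : parkAux f n = some fun i => some (ρ i)) {k : ℕ} (hk : k ≤ n) {occ}
    (h : parkAux f k = some occ) :
    ∀ s c, occ s = some c ↔ (ρ s = c ∧ c.val < k) := by
  have hfwd : ∀ s c, occ s = some c → ρ s = c ∧ c.val < k := by
    intro s c hc
    have := occ_mono hk h hρ s c hc
    exact ⟨Option.some_injective _ this, car_lt h s c hc⟩
  intro s c
  refine ⟨hfwd s c, fun ⟨hc, hck⟩ => ?_⟩
  -- card argument
  have hsub : (Finset.univ.filter fun s => (occ s).isSome)
      ⊆ (Finset.univ.filter fun s => (ρ s).val < k) := by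
    intro x hx
    rw [Finset.mem_filter] at hx ⊢
    obtain ⟨c', hc'⟩ := Option.isSome_iff_exists.mp hx.2
    have := hfwd x c' hc'
    exact ⟨Finset.mem_univ _, this.1 ▸ this.2⟩
  have heq : (Finset.univ.filter fun s => (occ s).isSome)
      = (Finset.univ.filter fun s => (ρ s).val < k) :=
    Finset.eq_of_subset_of_card_le hsub (by rw [occ_card h hk, card_rho_lt ρ hk])
  have hs : s ∈ (Finset.univ.filter fun s => (occ s).isSome) := by
    rw [heq, Finset.mem_filter]; exact ⟨Finset.mem_univ _, hc ▸ hck⟩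
  rw [Finset.mem_filter] at hs
  obtain ⟨c', hc'⟩ := Option.isSome_iff_exists.mp hs.2
  have := (hfwd s c' hc').1
  rw [hc']; rw [← hc, this]

lemma middle_max {ρ : Equiv.Perm (Fin n)} (hav : AvoidsAll ρ [p132, p231])
    {i j k : Fin n} (hij : i < j) (hjk : j < k)
    (h1 : ρ i < ρ j) (h2 : ρ k < ρ j) : False := by
  have hmono : StrictMono (![i, j, k] : Fin 3 → Fin n) := by
    intro a b hab
    fin_cases a <;> fin_cases b <;>
      first
        | exact absurd hab (by decide)
        | simpa using hij
        | simpa using hjk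
        | simpa using hij.trans hjk
  rcases lt_trichotomy (ρ i) (ρ k) with h3 | h3 | h3
  · apply hav p132 (by simp)
    refine ⟨![i, j, k], hmono, ?_⟩
    intro a b
    fin_cases a <;> fin_cases b <;>
      simp only [Matrix.cons_val_zero, Matrix.cons_val_one, Matrix.head_cons,
        Matrix.cons_val_two, Matrix.tail_cons, Fin.isValue] <;>
      first
        | exact iff_of_true (by decide) h1
        | exact iff_of_true (by decide) h2
        | exact iff_of_true (by decide) h3
        | exact iff_of_false (by decide) (lt_asymm h1)
        | exact iff_of_false (by decide) (lt_asymm h2)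
        | exact iff_of_false (by decide) (lt_asymm h3)
        | exact iff_of_false (by decide) (lt_irrefl _)
  · exact absurd (ρ.injective h3) (by intro h; subst h; exact absurd (hij.trans hjk) (lt_irrefl _))
  · apply hav p231 (by simp)
    refine ⟨![i, j, k], hmono, ?_⟩
    intro a b
    fin_cases a <;> fin_cases b <;>
      simp only [Matrix.cons_val_zero, Matrix.cons_val_one, Matrix.head_cons,
        Matrix.cons_val_two, Matrix.tail_cons, Fin.isValue] <;>
      first
        | exact iff_of_true (by decide) h1
        | exact iff_of_true (by decide) h2
        | exact iff_of_true (by decide) h3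
        | exact iff_of_false (by decide) (lt_asymm h1)
        | exact iff_of_false (by decide) (lt_asymm h2)
        | exact iff_of_false (by decide) (lt_asymm h3)
        | exact iff_of_false (by decide) (lt_irrefl _)

lemma avoids_of_no_middle_max {ρ : Equiv.Perm (Fin n)}
    (h : ∀ i j k : Fin n, i < j → j < k → ρ i < ρ j → ρ k < ρ j → False) :
    AvoidsAll ρ [p132, p231] := by
  rintro σ hσ ⟨g, hg, hcond⟩
  have hσ' : σ 0 < σ 1 ∧ σ 2 < σ 1 := by
    simp only [List.mem_cons, List.not_mem_nil, or_false] at hσ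
    rcases hσ with rfl | rfl
    · exact ⟨by decide, by decide⟩
    · exact ⟨by decide, by decide⟩
  exact h (g 0) (g 1) (g 2) (hg (by decide)) (hg (by decide))
    ((hcond 0 1).mp hσ'.1) ((hcond 2 1).mp hσ'.2)


/-- preference of car `k` as a natural number -/
def F (f : Fin n → Fin n) (k : ℕ) : ℕ := if h : k < n then (f ⟨k, h⟩).val else 0

lemma F_eq {f : Fin n → Fin n} {k : ℕ} (h : k < n) : F f k = (f ⟨k, h⟩).val := dif_pos h

lemma F_lt {f : Fin n → Fin n} {k : ℕ} (h : k < n) : F f k < n := by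
  rw [F_eq h]; exact (f ⟨k, h⟩).isLt

/-- left end of the interval occupied after cars `0..k` have parked -/
def lof (f : Fin n → Fin n) : ℕ → ℕ
  | 0 => F f 0
  | k+1 => if F f (k+1) < lof f k then lof f k - 1 else lof f k

/-- the spot where car `k` parks -/
def spotf (f : Fin n → Fin n) : ℕ → ℕ
  | 0 => F f 0
  | k+1 => if F f (k+1) < lof f k then lof f k - 1 else lof f k + (k+1)

/-- the structural predicate: each car parks adjacent to the occupied interval -/
def Q (f : Fin n → Fin n) : Prop := ∀ k : ℕ, k + 1 < n →
  (F f (k+1) + 1 = lof f k) ∨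
  (lof f k ≤ F f (k+1) ∧ F f (k+1) ≤ lof f k + (k+1) ∧ lof f k + (k+1) < n)

lemma left_iff {f : Fin n → Fin n} (hQ : Q f) {k : ℕ} (hk : k + 1 < n) :
    F f (k+1) < lof f k ↔ F f (k+1) + 1 = lof f k := by
  constructor
  · intro h
    rcases hQ k hk with h' | h'
    · exact h'
    · omega
  · omega

lemma lof_add_lt {f : Fin n → Fin n} (hQ : Q f) : ∀ k, k < n → lof f k + k < n := by
  intro k
  induction k with
  | zero => intro h; simpa [lof] using F_lt h
  | succ k ih =>
    intro h
    have ihk := ih (by omega)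
    rcases hQ k h with h' | h'
    · have : F f (k+1) < lof f k := by omega
      simp only [lof, if_pos this]; omega
    · have : ¬ F f (k+1) < lof f k := by omega
      simp only [lof, if_neg this]; omega

lemma spotf_lt {f : Fin n → Fin n} (hQ : Q f) : ∀ k, k < n → spotf f k < n := by
  intro k hk
  cases k with
  | zero => simpa [spotf] using F_lt hk
  | succ k =>
    rcases hQ k hk with h' | h'
    · have : F f (k+1) < lof f k := by omega
      simp only [spotf, if_pos this]
      have := lof_add_lt hQ k (by omega); omega
    · have : ¬ F f (k+1) < lof f k := by omega
      simp only [spotf, if_neg this]; omega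

lemma F_le_spotf {f : Fin n → Fin n} (hQ : Q f) : ∀ k, k < n → F f k ≤ spotf f k := by
  intro k hk
  cases k with
  | zero => simp [spotf]
  | succ k =>
    rcases hQ k hk with h' | h'
    · have hc : F f (k+1) < lof f k := by omega
      simp only [spotf, if_pos hc]; omega
    · have hc : ¬ F f (k+1) < lof f k := by omega
      simp only [spotf, if_neg hc]; omega

/-- the spots of cars `0..k` are exactly the interval `[lof f k, lof f k + k]` -/
lemma geom {f : Fin n → Fin n} (hQ : Q f) : ∀ k, k < n → ∀ s : ℕ,
    (∃ c, c ≤ k ∧ spotf f c = s) ↔ (lof f k ≤ s ∧ s ≤ lof f k + k) := by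
  intro k
  induction k with
  | zero =>
    intro _ s
    constructor
    · rintro ⟨c, hc, rfl⟩
      have : c = 0 := by omega
      subst this; simp [spotf, lof]
    · intro hs
      exact ⟨0, le_refl _, by simp only [spotf, lof] at hs ⊢; omega⟩
  | succ k ih =>
    intro hk s
    have ihs := ih (by omega)
    rcases hQ k hk with h' | h'
    · have hc : F f (k+1) < lof f k := by omega
      have hlo : 1 ≤ lof f k := by omega
      constructor
      · rintro ⟨c, hc', rfl⟩
        rcases Nat.lt_or_ge c (k+1) with h'' | h''
        · have := (ihs (spotf f c)).mp ⟨c, by omega, rfl⟩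
          simp only [lof, if_pos hc]; omega
        · have : c = k + 1 := by omega
          subst this
          simp only [spotf, if_pos hc, lof]; omega
      · intro hs
        simp only [lof, if_pos hc] at hs
        rcases Nat.lt_or_ge s (lof f k) with h'' | h''
        · refine ⟨k+1, le_refl _, ?_⟩
          simp only [spotf, if_pos hc]; omega
        · obtain ⟨c, hc', hcs⟩ := (ihs s).mpr ⟨h'', by omega⟩
          exact ⟨c, by omega, hcs⟩
    · have hc : ¬ F f (k+1) < lof f k := by omega
      constructor
      · rintro ⟨c, hc', rfl⟩
        rcases Nat.lt_or_ge c (k+1) with h'' | h''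
        · have := (ihs (spotf f c)).mp ⟨c, by omega, rfl⟩
          simp only [lof, if_neg hc]; omega
        · have : c = k + 1 := by omega
          subst this
          simp only [spotf, if_neg hc, lof]; omega
      · intro hs
        simp only [lof, if_neg hc] at hs
        rcases Nat.lt_or_ge s (lof f k + (k+1)) with h'' | h''
        · obtain ⟨c, hc', hcs⟩ := (ihs s).mpr ⟨by omega, by omega⟩
          exact ⟨c, by omega, hcs⟩
        · refine ⟨k+1, le_refl _, ?_⟩
          simp only [spotf, if_neg hc]; omega

/-- new car parks outside the old interval -/
lemma spotf_fresh {f : Fin n → Fin n} (hQ : Q f) {k : ℕ} (hk : k + 1 < n) :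
    ¬ (lof f k ≤ spotf f (k+1) ∧ spotf f (k+1) ≤ lof f k + k) := by
  rcases hQ k hk with h' | h'
  · have hc : F f (k+1) < lof f k := by omega
    simp only [spotf, if_pos hc]; omega
  · have hc : ¬ F f (k+1) < lof f k := by omega
    simp only [spotf, if_neg hc]; omega

lemma spotf_inj {f : Fin n → Fin n} (hQ : Q f) : ∀ {c c' : ℕ}, c < c' → c' < n →
    spotf f c ≠ spotf f c' := by
  intro c c' hcc' hc'n heq
  obtain ⟨k, rfl⟩ : ∃ k, c' = k + 1 := ⟨c' - 1, by omega⟩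
  have hmem : lof f k ≤ spotf f c ∧ spotf f c ≤ lof f k + k :=
    (geom hQ k (by omega) (spotf f c)).mp ⟨c, by omega, rfl⟩
  rw [heq] at hmem
  exact spotf_fresh hQ hc'n hmem


lemma sim {f : Fin n → Fin n} (hQ : Q f) : ∀ k, k ≤ n → ∃ occ, parkAux f k = some occ ∧
    ∀ (s c : Fin n), occ s = some c ↔ (c.val < k ∧ spotf f c.val = s.val) := by
  intro k
  induction k with
  | zero =>
    intro _
    refine ⟨fun _ => none, rfl, ?_⟩
    intro s c; simp
  | succ k ih =>
    intro hk1
    have hkn : k < n := by omega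
    obtain ⟨occ, hpk, hiff⟩ := ih (by omega)
    set T := Finset.univ.filter (fun s => f ⟨k, hkn⟩ ≤ s ∧ occ s = none) with hT
    have ht : spotf f k < n := spotf_lt hQ k hkn
    set tF : Fin n := ⟨spotf f k, ht⟩ with htF
    have hA : tF ∈ T ∧ ∀ s ∈ T, tF ≤ s := by
      cases k with
      | zero =>
        have hnone0 : ∀ s, occ s = none := by
          intro s
          cases hs : occ s with
          | none => rfl
          | some c => exact absurd ((hiff _ _).mp hs).1 (by omega)
        constructor
        · rw [hT, Finset.mem_filter]
          refine ⟨Finset.mem_univ _, ?_, hnone0 _⟩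
          rw [Fin.le_def]
          have : tF.val = (f ⟨0, hkn⟩).val := by rw [htF]; simp [spotf, F_eq hkn]
          omega
        · intro s hs
          rw [hT, Finset.mem_filter] at hs
          rw [Fin.le_def]
          have h1 : tF.val = (f ⟨0, hkn⟩).val := by rw [htF]; simp [spotf, F_eq hkn]
          have h2 := Fin.le_def.mp hs.2.1
          omega
      | succ m =>
        have hgeo := geom hQ m (by omega)
        have hocc : ∀ s : Fin n, occ s = none ↔ (s.val < lof f m ∨ lof f m + m < s.val) := by
          intro s
          constructor
          · intro hs
            by_contra hcon
            push_neg at hcon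
            obtain ⟨c, hc, hcs⟩ := (hgeo s.val).mpr ⟨hcon.1, hcon.2⟩
            have : occ s = some ⟨c, by omega⟩ := (hiff s ⟨c, by omega⟩).mpr ⟨by simpa using by omega, hcs⟩
            rw [hs] at this; simp at this
          · intro hs
            cases hc : occ s with
            | none => rfl
            | some c =>
              obtain ⟨hck, hcs⟩ := (hiff s c).mp hc
              have := (hgeo s.val).mp ⟨c.val, by omega, hcs⟩
              omega
        rcases hQ m (by omega) with h' | h'
        all_goals {
          constructor
          · rw [hT, Finset.mem_filter]
            refine ⟨Finset.mem_univ _, ?_, ?_⟩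
            · rw [Fin.le_def, ← F_eq hkn]
              have : tF.val = spotf f (m+1) := rfl
              rw [this]
              exact F_le_spotf hQ _ hkn
            · rw [hocc]
              have h2 : tF.val = spotf f (m+1) := rfl
              first
              | (have hc : F f (m+1) < lof f m := by omega
                 have h3 : spotf f (m+1) = lof f m - 1 := by simp [spotf, if_pos hc]
                 omega)
              | (have hc : ¬ F f (m+1) < lof f m := by omega
                 have h3 : spotf f (m+1) = lof f m + (m+1) := by simp [spotf, if_neg hc]
                 omega)
          · intro s hs
            rw [hT, Finset.mem_filter] at hs
            obtain ⟨-, hfs, hnone⟩ := hs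
            rw [Fin.le_def]
            rw [Fin.le_def, ← F_eq hkn] at hfs
            rw [hocc] at hnone
            have h2 : tF.val = spotf f (m+1) := rfl
            first
            | (have hc : F f (m+1) < lof f m := by omega
               have h3 : spotf f (m+1) = lof f m - 1 := by simp [spotf, if_pos hc]
               omega)
            | (have hc : ¬ F f (m+1) < lof f m := by omega
               have h3 : spotf f (m+1) = lof f m + (m+1) := by simp [spotf, if_neg hc]
               omega)
        }
    obtain ⟨hmem, hbound⟩ := hA
    have hS : T.Nonempty := ⟨tF, hmem⟩
    have hmin : T.min' hS = tF := le_antisymm (T.min'_le _ hmem) (Finset.le_min' _ _ _ hbound)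
    refine ⟨Function.update occ tF (some ⟨k, hkn⟩), ?_, ?_⟩
    · rw [parkAux_succ, hpk]
      simp only [Option.bind_some, dif_pos hkn]
      rw [dif_pos hS, hmin]
    · intro s c
      rcases eq_or_ne s tF with rfl | hne
      · rw [Function.update_self]
        constructor
        · intro hc
          obtain rfl := Option.some_injective _ hc
          exact ⟨by simp, rfl⟩
        · rintro ⟨hck, hcs⟩
          rcases Nat.lt_or_ge c.val k with h'' | h''
          · exact absurd hcs (spotf_inj hQ h'' hkn)
          · have : c.val = k := by omega
            congr 1
            exact Fin.ext this.symm
      · rw [Function.update_of_ne hne]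
        constructor
        · intro hc
          obtain ⟨h1, h2⟩ := (hiff s c).mp hc
          exact ⟨by omega, h2⟩
        · rintro ⟨hck, hcs⟩
          rcases Nat.lt_or_ge c.val k with h'' | h''
          · exact (hiff s c).mpr ⟨h'', hcs⟩
          · have hck' : c.val = k := by omega
            exfalso; apply hne
            apply Fin.ext
            rw [← hcs, hck', htF]

lemma Q_imp_mem {f : Fin n → Fin n} (hn : 1 ≤ n) (hQ : Q f) :
    IsParkingFunction f ∧ ∃ ρ : Equiv.Perm (Fin n), IsParkingPerm f ρ ∧
      AvoidsAll ρ [p132, p231] := by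
  obtain ⟨occ, hpk, hiff⟩ := sim hQ n (le_refl n)
  -- totality: every spot is occupied
  have hlo : lof f (n-1) = 0 := by
    have := lof_add_lt hQ (n-1) (by omega); omega
  have htot : ∀ s : Fin n, ∃ c : Fin n, occ s = some c := by
    intro s
    obtain ⟨c, hc, hcs⟩ := (geom hQ (n-1) (by omega) s.val).mpr (by constructor <;> omega)
    exact ⟨⟨c, by omega⟩, (hiff s ⟨c, by omega⟩).mpr ⟨by simpa using by omega, hcs⟩⟩
  have hocc : ∀ s : Fin n, (occ s).isSome := fun s => by
    obtain ⟨c, hc⟩ := htot s; simp [hc]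
  set g : Fin n → Fin n := fun s => (occ s).get (hocc s) with hg
  have hgs : ∀ s, occ s = some (g s) := fun s => by simp [hg]
  have hspec : ∀ s, (g s).val < n ∧ spotf f (g s).val = s.val :=
    fun s => (hiff s (g s)).mp (hgs s)
  have hginj : Function.Injective g := by
    intro s t hst
    have h1 := (hspec s).2
    have h2 := (hspec t).2
    rw [hst] at h1
    exact Fin.ext (h1 ▸ h2 ▸ rfl)
  have hgbij := Finite.injective_iff_bijective.mp hginj
  set ρ := Equiv.ofBijective g hgbij with hρ
  have hρapp : ∀ s, ρ s = g s := fun s => rfl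
  refine ⟨?_, ρ, ?_, ?_⟩
  · -- IsParkingFunction
    intro i
    have hcard : (Finset.univ.filter fun s : Fin n => s ≤ i).card = i.val + 1 := by
      have : (Finset.univ.filter fun s : Fin n => s ≤ i) = Finset.Iic i := by
        ext s; simp
      rw [this, Fin.card_Iic]
    rw [← hcard]
    apply Finset.card_le_card_of_injOn g
    · intro s hs
      rw [Finset.mem_coe, Finset.mem_filter] at hs ⊢
      refine ⟨Finset.mem_univ _, ?_⟩
      have h1 := (hspec s).2
      have h2 : F f (g s).val ≤ spotf f (g s).val := F_le_spotf hQ _ (g s).isLt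
      rw [F_eq (g s).isLt] at h2
      rw [Fin.le_def]
      have h3 : (⟨(g s).val, (g s).isLt⟩ : Fin n) = g s := Fin.eta _ _
      rw [h3] at h2
      have h4 := Fin.le_def.mp hs.2
      omega
    · intro a _ b _ hab
      exact hginj hab
  · -- IsParkingPerm
    rw [IsParkingPerm, hpk]
    congr 1
    funext s
    rw [hρapp, ← hgs]
  · -- AvoidsAll
    apply avoids_of_no_middle_max
    intro i j k hij hjk h1 h2
    simp only [hρapp] at h1 h2
    set c := g j with hc
    have hcpos : 1 ≤ c.val := by
      have := Fin.lt_def.mp h1; omega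
    have hspots := hspec j
    -- spots of cars < c form an interval containing i and k but not j
    have hgeo := geom hQ (c.val - 1) (by omega)
    have hi' : lof f (c.val-1) ≤ i.val ∧ i.val ≤ lof f (c.val-1) + (c.val-1) :=
      (hgeo i.val).mp ⟨(g i).val, by have := Fin.lt_def.mp h1; omega, (hspec i).2⟩
    have hk' : lof f (c.val-1) ≤ k.val ∧ k.val ≤ lof f (c.val-1) + (c.val-1) :=
      (hgeo k.val).mp ⟨(g k).val, by have := Fin.lt_def.mp h2; omega, (hspec k).2⟩
    have hj' : lof f (c.val-1) ≤ j.val ∧ j.val ≤ lof f (c.val-1) + (c.val-1) := by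
      have hij' := Fin.lt_def.mp hij
      have hjk' := Fin.lt_def.mp hjk
      constructor <;> omega
    obtain ⟨c', hc', hcs'⟩ := (hgeo j.val).mpr hj'
    have : spotf f c' = spotf f c.val := by rw [hcs', (hspec j).2]
    exact spotf_inj hQ (by omega) c.isLt this


lemma conv_main {f : Fin n → Fin n} {ρ : Equiv.Perm (Fin n)}
    (hρ : parkAux f n = some fun i => some (ρ i))
    (hav : AvoidsAll ρ [p132, p231]) :
    ∀ k, k < n →
      ((∀ t : Fin n, (ρ t).val ≤ k ↔ lof f k ≤ t.val ∧ t.val ≤ lof f k + k) ∧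
       (∀ j, j < k → (F f (j+1) + 1 = lof f j ∨
          (lof f j ≤ F f (j+1) ∧ F f (j+1) ≤ lof f j + (j+1) ∧ lof f j + (j+1) < n)))) := by
  have hsome : ∀ k, k ≤ n → ∃ o, parkAux f k = some o := by
    intro k hk
    have := parkAux_isSome_of_le f hk (by rw [hρ]; rfl)
    exact Option.isSome_iff_exists.mp this
  intro k
  induction k with
  | zero =>
    intro hn
    refine ⟨?_, by omega⟩
    obtain ⟨occ1, hpk1⟩ := hsome 1 (by omega)
    obtain ⟨occ0, hpk0, hS, hupd⟩ := parkAux_step hn hpk1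
    have hocc0 : occ0 = fun _ => none := by
      have h0 : parkAux f 0 = some fun _ => none := rfl
      rw [h0] at hpk0
      exact (Option.some_injective _ hpk0).symm
    subst hocc0
    have hmem0 : f ⟨0, hn⟩ ∈ Finset.univ.filter
        (fun s => f ⟨0, hn⟩ ≤ s ∧ (fun _ => (none : Option (Fin n))) s = none) := by
      rw [Finset.mem_filter]; exact ⟨Finset.mem_univ _, le_refl _, rfl⟩
    have hmin : (Finset.univ.filter
        (fun s => f ⟨0, hn⟩ ≤ s ∧ (fun _ => (none : Option (Fin n))) s = none)).min' hS
        = f ⟨0, hn⟩ := by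
      apply le_antisymm (Finset.min'_le _ _ hmem0)
      apply Finset.le_min'
      intro y hy
      rw [Finset.mem_filter] at hy
      exact hy.2.1
    have hρ0 : ρ (f ⟨0, hn⟩) = ⟨0, hn⟩ := by
      have h1 : occ1 (f ⟨0, hn⟩) = some ⟨0, hn⟩ := by
        rw [hupd, hmin]
        exact Function.update_self _ _ _
      exact ((occ_char hρ (by omega) hpk1 _ _).mp h1).1
    intro t
    have hlof0 : lof f 0 = (f ⟨0, hn⟩).val := by
      show F f 0 = _
      rw [F_eq hn]
    constructor
    · intro ht
      have h2 : ρ t = ⟨0, hn⟩ := Fin.ext (Nat.le_zero.mp ht)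
      have h3 : t = f ⟨0, hn⟩ := ρ.injective (h2.trans hρ0.symm)
      subst h3; omega
    · intro ht
      have h3 : t = f ⟨0, hn⟩ := Fin.ext (by omega)
      subst h3
      simp [hρ0]
  | succ k ih =>
    intro hk1
    have hkn : k < n := by omega
    obtain ⟨hPk, hQk⟩ := ih hkn
    obtain ⟨occ2, hpk2⟩ := hsome (k+2) (by omega)
    obtain ⟨occ, hpk, hS, hupd⟩ := parkAux_step (show k+1 < n from hk1) hpk2
    set T := Finset.univ.filter (fun s => f ⟨k+1, hk1⟩ ≤ s ∧ occ s = none) with hT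
    set t' := T.min' hS with ht'
    have hch1 := occ_char hρ (show k+1 ≤ n by omega) hpk
    have hch2 := occ_char hρ (show k+2 ≤ n by omega) hpk2
    have hmem : f ⟨k+1, hk1⟩ ≤ t' ∧ occ t' = none := by
      have h5 := Finset.mem_filter.mp (T.min'_mem hS)
      exact ⟨h5.2.1, h5.2.2⟩
    have hρt : ρ t' = ⟨k+1, hk1⟩ := by
      have h1 : occ2 t' = some ⟨k+1, hk1⟩ := by
        rw [hupd]; exact Function.update_self _ _ _
      exact ((hch2 _ _).mp h1).1
    have hnone : ∀ s : Fin n, occ s = none ↔ (s.val < lof f k ∨ lof f k + k < s.val) := by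
      intro s
      constructor
      · intro hs
        by_contra hcon
        push_neg at hcon
        have h1 : (ρ s).val ≤ k := (hPk s).mpr ⟨hcon.1, hcon.2⟩
        have h2 : occ s = some (ρ s) := (hch1 s (ρ s)).mpr ⟨rfl, by omega⟩
        rw [hs] at h2; simp at h2
      · intro hs
        cases hc : occ s with
        | none => rfl
        | some c =>
          obtain ⟨hc1, hc2⟩ := (hch1 s c).mp hc
          have h3 : (ρ s).val ≤ k := by rw [hc1]; omega
          have := (hPk s).mp h3
          omega
    have hcvx : ∀ t1 t2 t3 : Fin n, t1 < t2 → t2 < t3 →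
        (ρ t1).val ≤ k+1 → (ρ t3).val ≤ k+1 → (ρ t2).val ≤ k+1 := by
      intro t1 t2 t3 h12 h23 hr1 hr3
      by_contra hcon
      push_neg at hcon
      exact middle_max hav h12 h23 (Fin.lt_def.mpr (by omega)) (Fin.lt_def.mpr (by omega))
    set t1 := ρ.symm ⟨0, by omega⟩ with ht1
    have hρt1 : (ρ t1).val = 0 := by rw [ht1, Equiv.apply_symm_apply]
    have ht1mem : lof f k ≤ t1.val ∧ t1.val ≤ lof f k + k := (hPk t1).mp (by omega)
    have hpos : t'.val < lof f k ∨ lof f k + k < t'.val := (hnone t').mp hmem.2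
    have huniq : ∀ t : Fin n, (ρ t).val = k + 1 → t = t' := by
      intro t ht
      apply ρ.injective
      rw [hρt]; exact Fin.ext ht
    rcases hpos with hpos | hpos
    · -- car k+1 went left
      have hlo1 : 1 ≤ lof f k := by omega
      have hteq : t'.val = lof f k - 1 := by
        by_contra hne
        have hlt : t'.val < lof f k - 1 := by omega
        have hwn : lof f k - 1 < n := by have := t1.isLt; omega
        obtain ⟨w, hwval⟩ : ∃ w : Fin n, w.val = lof f k - 1 := ⟨⟨lof f k - 1, hwn⟩, rfl⟩
        have h12 : t' < w := Fin.lt_def.mpr (by omega)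
        have h23 : w < t1 := Fin.lt_def.mpr (by omega)
        have hcv := hcvx t' w t1 h12 h23 (by rw [hρt]) (by omega)
        rcases Nat.lt_or_ge (ρ w).val (k+1) with h' | h'
        · have := (hPk w).mp (by omega)
          omega
        · have h'' : (ρ w).val = k+1 := by omega
          have hvv := congrArg Fin.val (huniq w h'')
          omega
      have hF : F f (k+1) + 1 = lof f k := by
        have hFle : F f (k+1) ≤ t'.val := by
          rw [F_eq hk1]; exact Fin.le_def.mp hmem.1
        rcases Nat.lt_or_ge (F f (k+1)) (lof f k - 1) with h' | h'
        · exfalso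
          have humem : (⟨F f (k+1), F_lt hk1⟩ : Fin n) ∈ T := by
            rw [hT, Finset.mem_filter]
            refine ⟨Finset.mem_univ _, ?_, ?_⟩
            · rw [Fin.le_def, ← F_eq hk1]
            · rw [hnone]; left; simp only [Fin.val_mk]; omega
          have hle := T.min'_le _ humem
          rw [← ht'] at hle
          have := Fin.le_def.mp hle
          simp only [Fin.val_mk] at this
          omega
        · omega
      have hlof1 : lof f (k+1) = lof f k - 1 := by
        simp only [lof, if_pos (show F f (k+1) < lof f k by omega)]
      refine ⟨?_, ?_⟩
      · intro t
        rw [hlof1]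
        constructor
        · intro ht
          rcases Nat.lt_or_ge (ρ t).val (k+1) with h' | h'
          · have := (hPk t).mp (by omega); omega
          · have := huniq t (by omega)
            subst this; omega
        · intro ht
          rcases Nat.lt_or_ge t.val (lof f k) with h' | h'
          · have h3 : t = t' := Fin.ext (by omega)
            subst h3; rw [hρt]
          · have := (hPk t).mpr ⟨h', by omega⟩; omega
      · intro j hj
        rcases Nat.lt_or_ge j k with h' | h'
        · exact hQk j h'
        · have h3 : j = k := by omega
          subst h3
          left; exact hF
    · -- car k+1 went right
      have hteq : t'.val = lof f k + k + 1 := by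
        by_contra hne
        have hlt : lof f k + k + 1 < t'.val := by omega
        have hwn : lof f k + k + 1 < n := by have := t'.isLt; omega
        obtain ⟨w, hwval⟩ : ∃ w : Fin n, w.val = lof f k + k + 1 := ⟨⟨lof f k + k + 1, hwn⟩, rfl⟩
        have h12 : t1 < w := Fin.lt_def.mpr (by omega)
        have h23 : w < t' := Fin.lt_def.mpr (by omega)
        have hcv := hcvx t1 w t' h12 h23 (by omega) (by rw [hρt])
        rcases Nat.lt_or_ge (ρ w).val (k+1) with h' | h'
        · have := (hPk w).mp (by omega)
          omega
        · have h'' : (ρ w).val = k+1 := by omega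
          have hvv := congrArg Fin.val (huniq w h'')
          omega
      have hFge : lof f k ≤ F f (k+1) := by
        rcases Nat.lt_or_ge (F f (k+1)) (lof f k) with h' | h'
        · exfalso
          have humem : (⟨F f (k+1), F_lt hk1⟩ : Fin n) ∈ T := by
            rw [hT, Finset.mem_filter]
            refine ⟨Finset.mem_univ _, ?_, ?_⟩
            · rw [Fin.le_def, ← F_eq hk1]
            · rw [hnone]; left; simp only [Fin.val_mk]; omega
          have hle := T.min'_le _ humem
          rw [← ht'] at hle
          have := Fin.le_def.mp hle
          simp only [Fin.val_mk] at this
          omega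
        · exact h'
      have hFle : F f (k+1) ≤ lof f k + (k+1) := by
        have h4 : F f (k+1) ≤ t'.val := by
          rw [F_eq hk1]; exact Fin.le_def.mp hmem.1
        omega
      have hbnd : lof f k + (k+1) < n := by
        have := t'.isLt; omega
      have hlof1 : lof f (k+1) = lof f k := by
        simp only [lof, if_neg (show ¬ F f (k+1) < lof f k by omega)]
      refine ⟨?_, ?_⟩
      · intro t
        rw [hlof1]
        constructor
        · intro ht
          rcases Nat.lt_or_ge (ρ t).val (k+1) with h' | h'
          · have := (hPk t).mp (by omega); omega
          · have := huniq t (by omega)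
            subst this; omega
        · intro ht
          rcases Nat.lt_or_ge (lof f k + k) t.val with h' | h'
          · have h3 : t = t' := Fin.ext (by omega)
            subst h3; rw [hρt]
          · have := (hPk t).mpr ⟨ht.1, by omega⟩; omega
      · intro j hj
        rcases Nat.lt_or_ge j k with h' | h'
        · exact hQk j h'
        · have h3 : j = k := by omega
          subst h3
          right; exact ⟨hFge, hFle, hbnd⟩

lemma mem_imp_Q {f : Fin n → Fin n} {ρ : Equiv.Perm (Fin n)}
    (hρ : parkAux f n = some fun i => some (ρ i))
    (hav : AvoidsAll ρ [p132, p231]) : Q f := by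
  intro j hj
  exact (conv_main hρ hav (j+1) hj).2 j (Nat.lt_succ_self j)


/-- the data indexing parking functions with valley outcome: for each car `c+1`
a choice among `c+3` options (`0` = park left; `j ≥ 1` = preference `lo + j - 1`). -/
abbrev Choice (n : ℕ) := ∀ c : Fin (n-1), Fin (c.val + 3)

/-- total number of "left" choices among cars `1..k` -/
def Lcount (x : Choice n) (k : ℕ) : ℕ :=
  (Finset.univ.filter fun c : Fin (n-1) => c.val < k ∧ x c = 0).card

/-- total number of "left" choices -/
def pC (x : Choice n) : ℕ := (Finset.univ.filter fun c : Fin (n-1) => x c = 0).card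

/-- intended left end of the occupied interval after cars `0..k` -/
def bLo (x : Choice n) (k : ℕ) : ℕ := pC x - Lcount x k

lemma Lcount_zero (x : Choice n) : Lcount x 0 = 0 := by simp [Lcount]

lemma Lcount_top (x : Choice n) : Lcount x (n-1) = pC x := by
  unfold Lcount pC
  congr 1
  apply Finset.filter_congr
  intro c _
  simp [c.isLt]

lemma Lcount_succ (x : Choice n) (k : ℕ) (h : k < n - 1) :
    Lcount x (k+1) = Lcount x k + (if x ⟨k, h⟩ = 0 then 1 else 0) := by
  unfold Lcount
  by_cases hx : x ⟨k, h⟩ = 0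
  · rw [if_pos hx]
    have : (Finset.univ.filter fun c : Fin (n-1) => c.val < k + 1 ∧ x c = 0)
        = insert ⟨k, h⟩ (Finset.univ.filter fun c : Fin (n-1) => c.val < k ∧ x c = 0) := by
      ext c
      simp only [Finset.mem_filter, Finset.mem_insert, Finset.mem_univ, true_and]
      constructor
      · rintro ⟨h1, h2⟩
        rcases Nat.lt_or_ge c.val k with h3 | h3
        · exact Or.inr ⟨h3, h2⟩
        · exact Or.inl (Fin.ext (show c.val = k by omega))
      · rintro (rfl | ⟨h1, h2⟩)
        · exact ⟨Nat.lt_succ_self k, hx⟩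
        · exact ⟨Nat.lt_succ_of_lt h1, h2⟩
    rw [this, Finset.card_insert_of_notMem (by simp)]
  · rw [if_neg hx]
    have heq : (Finset.univ.filter fun c : Fin (n-1) => c.val < k + 1 ∧ x c = 0)
        = (Finset.univ.filter fun c : Fin (n-1) => c.val < k ∧ x c = 0) := by
      ext c
      simp only [Finset.mem_filter, Finset.mem_univ, true_and]
      constructor
      · rintro ⟨h1, h2⟩
        rcases Nat.lt_or_ge c.val k with h3 | h3
        · exact ⟨h3, h2⟩
        · exfalso
          have hck : c = ⟨k, h⟩ := Fin.ext (show c.val = k by omega)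
          subst hck; exact hx h2
      · rintro ⟨h1, h2⟩
        exact ⟨Nat.lt_succ_of_lt h1, h2⟩
    rw [heq, Nat.add_zero]

lemma Lcount_le (x : Choice n) (k : ℕ) : Lcount x k ≤ pC x := by
  apply Finset.card_le_card
  intro c hc
  rw [Finset.mem_filter] at hc ⊢
  exact ⟨hc.1, hc.2.2⟩

lemma Lcount_lt_of_left (x : Choice n) {k : ℕ} (h : k < n - 1) (hx : x ⟨k, h⟩ = 0) :
    Lcount x k < pC x := by
  apply Finset.card_lt_card
  constructor
  · intro c hc
    rw [Finset.mem_filter] at hc ⊢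
    exact ⟨hc.1, hc.2.2⟩
  · intro hsub
    have hin := hsub (Finset.mem_filter.mpr ⟨Finset.mem_univ _, hx⟩)
    rw [Finset.mem_filter] at hin
    exact absurd hin.2.1 (Nat.lt_irrefl k)

/-- key bound: a "right" choice at car `k+1` leaves room on the right -/
lemma bLo_bound (x : Choice n) {k : ℕ} (h : k < n - 1) (hx : x ⟨k, h⟩ ≠ 0) :
    bLo x k + (k + 1) < n := by
  unfold bLo
  -- pC x - Lcount x k = # lefts with index ≥ k, all of which have index ≥ k+1
  have hsplit : pC x = Lcount x k +
      (Finset.univ.filter fun c : Fin (n-1) => ¬ c.val < k ∧ x c = 0).card := by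
    unfold pC Lcount
    rw [← Finset.card_filter_add_card_filter_not (fun c => c.val < k)]
    congr 1
    · congr 1; ext c; simp [and_comm]
    · congr 1; ext c; simp [and_comm]
  have hrest : (Finset.univ.filter fun c : Fin (n-1) => ¬ c.val < k ∧ x c = 0).card
      ≤ (Finset.univ.filter fun c : Fin (n-1) => ¬ c.val < k + 1).card := by
    apply Finset.card_le_card
    intro c hc
    rw [Finset.mem_filter] at hc ⊢
    refine ⟨hc.1, ?_⟩
    obtain ⟨h1, h2⟩ := hc.2
    intro h3
    have hck : c = ⟨k, h⟩ := Fin.ext (show c.val = k by omega)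
    subst hck
    exact hx h2
  have hcompl : (Finset.univ.filter fun c : Fin (n-1) => ¬ c.val < k + 1).card
      = (n - 1) - (k + 1) := by
    have h1 := Finset.card_filter_add_card_filter_not
      (s := (Finset.univ : Finset (Fin (n-1)))) (p := fun c => c.val < k + 1)
    have h2 : (Finset.univ.filter fun c : Fin (n-1) => c.val < k + 1).card = k + 1 :=
      card_val_lt (by omega)
    have h3 : (Finset.univ : Finset (Fin (n-1))).card = n - 1 := by
      rw [Finset.card_univ, Fintype.card_fin]
    omega
  omega


lemma pC_le (x : Choice n) : pC x ≤ n - 1 := by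
  have := Finset.card_filter_le (Finset.univ : Finset (Fin (n-1))) (fun c => x c = 0)
  simpa [pC] using this

lemma bLo_pos (x : Choice n) {k : ℕ} (h : k < n - 1) (hx : x ⟨k, h⟩ = 0) :
    1 ≤ bLo x k := by
  have := Lcount_lt_of_left x h hx
  unfold bLo; omega

lemma bLo_succ (x : Choice n) {k : ℕ} (h : k < n - 1) :
    bLo x (k+1) = if x ⟨k, h⟩ = 0 then bLo x k - 1 else bLo x k := by
  unfold bLo
  rw [Lcount_succ x k h]
  by_cases hx : x ⟨k, h⟩ = 0
  · rw [if_pos hx, if_pos hx]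
    have := Lcount_lt_of_left x h hx
    omega
  · rw [if_neg hx, if_neg hx]
    omega

/-- the intended preference of car `k` -/
def bF (x : Choice n) : ℕ → ℕ
  | 0 => pC x
  | k+1 => if h : k < n - 1 then
      (if x ⟨k, h⟩ = 0 then bLo x k - 1 else bLo x k + (x ⟨k, h⟩).val - 1)
    else 0

lemma bF_le (x : Choice n) : ∀ k, bF x k ≤ n - 1 := by
  intro k
  cases k with
  | zero => exact pC_le x
  | succ k =>
    show (if h : k < n - 1 then _ else 0) ≤ n - 1
    by_cases h : k < n - 1
    · rw [dif_pos h]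
      by_cases hx : x ⟨k, h⟩ = 0
      · rw [if_pos hx]
        have h1 : bLo x k ≤ pC x := Nat.sub_le _ _
        have h2 := pC_le x
        omega
      · rw [if_neg hx]
        have h1 := bLo_bound x h hx
        have h2 : (x ⟨k, h⟩).val < k + 3 := (x ⟨k, h⟩).isLt
        omega
    · rw [dif_neg h]; omega

def build (x : Choice n) : Fin n → Fin n :=
  fun m => ⟨min (bF x m.val) (n-1), by have := m.isLt; omega⟩

lemma F_build (x : Choice n) {k : ℕ} (h : k < n) : F (build x) k = bF x k := by
  rw [F_eq h]
  show min (bF x k) (n-1) = bF x k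
  exact min_eq_left (bF_le x k)

lemma val_pos_of_ne_zero {m : ℕ} {v : Fin (m+1)} (h : v ≠ 0) : 1 ≤ v.val := by
  by_contra hc
  push_neg at hc
  have h0 : v.val = 0 := by omega
  exact h (Fin.ext (by rw [h0, Fin.val_zero]))

lemma lof_build (x : Choice n) : ∀ k, k < n → lof (build x) k = bLo x k := by
  intro k
  induction k with
  | zero =>
    intro h
    show F (build x) 0 = pC x - Lcount x 0
    rw [F_build x h, Lcount_zero, Nat.sub_zero]
    rfl
  | succ k ih =>
    intro hk1
    have hkn1 : k < n - 1 := by omega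
    have ihk := ih (by omega)
    show (if F (build x) (k+1) < lof (build x) k then lof (build x) k - 1
        else lof (build x) k) = bLo x (k+1)
    rw [F_build x hk1, ihk, bLo_succ x hkn1]
    show (if bF x (k+1) < bLo x k then _ else _) = _
    have hbf : bF x (k+1) = if x ⟨k, hkn1⟩ = 0 then bLo x k - 1
        else bLo x k + (x ⟨k, hkn1⟩).val - 1 := dif_pos hkn1
    by_cases hx : x ⟨k, hkn1⟩ = 0
    · rw [if_pos hx] at hbf ⊢
      have hpos := bLo_pos x hkn1 hx
      rw [if_pos (by omega)]
    · rw [if_neg hx] at hbf ⊢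
      have hvpos : 1 ≤ (x ⟨k, hkn1⟩).val := val_pos_of_ne_zero hx
      rw [if_neg (by omega)]

lemma build_Q (x : Choice n) : Q (build x) := by
  intro k hk1
  have hkn1 : k < n - 1 := by omega
  have hlof := lof_build x k (by omega)
  have hbf : bF x (k+1) = if x ⟨k, hkn1⟩ = 0 then bLo x k - 1
      else bLo x k + (x ⟨k, hkn1⟩).val - 1 := dif_pos hkn1
  rw [F_build x hk1, hlof, hbf]
  by_cases hx : x ⟨k, hkn1⟩ = 0
  · rw [if_pos hx]
    left
    have := bLo_pos x hkn1 hx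
    omega
  · rw [if_neg hx]
    right
    have hvpos : 1 ≤ (x ⟨k, hkn1⟩).val := val_pos_of_ne_zero hx
    have hvlt : (x ⟨k, hkn1⟩).val < k + 3 := (x ⟨k, hkn1⟩).isLt
    have hbnd := bLo_bound x hkn1 hx
    refine ⟨by omega, by omega, by omega⟩

def decode (f : Fin n → Fin n) (hQ : Q f) : Choice n := fun c =>
  if h : F f (c.val+1) + 1 = lof f c.val then 0
  else ⟨F f (c.val+1) - lof f c.val + 1, by
    have hc : c.val + 1 < n := by have := c.isLt; omega
    rcases hQ c.val hc with h' | h'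
    · exact absurd h' h
    · omega⟩

lemma decode_eq_zero_iff (f : Fin n → Fin n) (hQ : Q f) (c : Fin (n-1)) :
    decode f hQ c = 0 ↔ F f (c.val+1) + 1 = lof f c.val := by
  unfold decode
  by_cases h : F f (c.val+1) + 1 = lof f c.val
  · rw [dif_pos h]; simp [h]
  · rw [dif_neg h]
    constructor
    · intro hc
      have := congrArg Fin.val hc
      simp only [Fin.val_mk, Fin.val_zero] at this
      exfalso; omega
    · intro hc; exact absurd hc h

lemma decode_val (f : Fin n → Fin n) (hQ : Q f) (c : Fin (n-1))
    (h : ¬ F f (c.val+1) + 1 = lof f c.val) :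
    (decode f hQ c).val = F f (c.val+1) - lof f c.val + 1 := by
  unfold decode
  rw [dif_neg h]

lemma lof_decomp (f : Fin n → Fin n) (hQ : Q f) :
    ∀ k, k ≤ n - 1 → lof f k + Lcount (decode f hQ) k = F f 0 := by
  intro k
  induction k with
  | zero =>
    intro _
    rw [Lcount_zero]
    show lof f 0 + 0 = F f 0
    simp [lof]
  | succ k ih =>
    intro hk1
    have hkn1 : k < n - 1 := by omega
    have hkn : k + 1 < n := by omega
    have ihk := ih (by omega)
    rw [Lcount_succ _ k hkn1]
    have hcond := decode_eq_zero_iff f hQ ⟨k, hkn1⟩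
    simp only [Fin.val_mk] at hcond
    by_cases h : F f (k+1) + 1 = lof f k
    · rw [if_pos (hcond.mpr h)]
      have hlof : lof f (k+1) = lof f k - 1 := by
        show (if F f (k+1) < lof f k then lof f k - 1 else lof f k) = _
        rw [if_pos (by omega)]
      omega
    · rw [if_neg (fun hc => h (hcond.mp hc))]
      rcases hQ k hkn with h' | h'
      · exact absurd h' h
      · have hlof : lof f (k+1) = lof f k := by
          show (if F f (k+1) < lof f k then lof f k - 1 else lof f k) = _
          rw [if_neg (by omega)]
        omega

lemma build_decode (f : Fin n → Fin n) (hQ : Q f) (hn : 1 ≤ n) :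
    build (decode f hQ) = f := by
  have hlofn : lof f (n-1) = 0 := by
    have := lof_add_lt hQ (n-1) (by omega)
    omega
  have hpC : pC (decode f hQ) = F f 0 := by
    have h1 := lof_decomp f hQ (n-1) (le_refl _)
    have h2 := Lcount_top (decode f hQ)
    omega
  have hbLo : ∀ k, k ≤ n - 1 → bLo (decode f hQ) k = lof f k := by
    intro k hk
    have := lof_decomp f hQ k hk
    unfold bLo
    omega
  funext m
  apply Fin.ext
  show min (bF (decode f hQ) m.val) (n-1) = (f m).val
  rw [min_eq_left (bF_le _ _)]
  have hm := m.isLt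
  rcases hmv : m.val with _ | k
  · have hm0 : m = ⟨0, hn⟩ := Fin.ext (show m.val = 0 by omega)
    subst hm0
    show pC (decode f hQ) = _
    rw [hpC, F_eq hn]
  · have hkn1 : k < n - 1 := by omega
    have hkn : k + 1 < n := by omega
    have hmk : m = ⟨k+1, hkn⟩ := Fin.ext (show m.val = k+1 by omega)
    subst hmk
    have hbf : bF (decode f hQ) (k+1) = if decode f hQ ⟨k, hkn1⟩ = 0
        then bLo (decode f hQ) k - 1
        else bLo (decode f hQ) k + (decode f hQ ⟨k, hkn1⟩).val - 1 := dif_pos hkn1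
    rw [hbf]
    have hcond := decode_eq_zero_iff f hQ ⟨k, hkn1⟩
    simp only [Fin.val_mk] at hcond
    by_cases h : F f (k+1) + 1 = lof f k
    · rw [if_pos (hcond.mpr h), hbLo k (by omega), ← F_eq hkn]
      omega
    · rw [if_neg (fun hc => h (hcond.mp hc)), hbLo k (by omega)]
      have hval := decode_val f hQ ⟨k, hkn1⟩ (by simpa using h)
      simp only [Fin.val_mk] at hval
      rw [hval, ← F_eq hkn]
      rcases hQ k hkn with h' | h'
      · exact absurd h' h
      · omega

lemma decode_build (x : Choice n) : decode (build x) (build_Q x) = x := by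
  funext c
  have hkn1 : c.val < n - 1 := c.isLt
  have hkn : c.val + 1 < n := by omega
  have hlof := lof_build x c.val (by omega)
  have hF := F_build x hkn
  have hbf : bF x (c.val+1) = if x ⟨c.val, hkn1⟩ = 0 then bLo x c.val - 1
      else bLo x c.val + (x ⟨c.val, hkn1⟩).val - 1 := dif_pos hkn1
  have hceta : (⟨c.val, hkn1⟩ : Fin (n-1)) = c := Fin.ext rfl
  rw [hceta] at hbf
  by_cases hx : x c = 0
  · rw [if_pos hx] at hbf
    have hx2 : x ⟨c.val, hkn1⟩ = 0 := by rw [hceta]; exact hx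
    have hpos : 1 ≤ bLo x c.val := bLo_pos x hkn1 hx2
    have hcond : F (build x) (c.val+1) + 1 = lof (build x) c.val := by
      rw [hF, hlof, hbf]; omega
    rw [(decode_eq_zero_iff (build x) (build_Q x) c).mpr hcond, hx]
  · rw [if_neg hx] at hbf
    have hvpos : 1 ≤ (x c).val := val_pos_of_ne_zero hx
    have hcond : ¬ F (build x) (c.val+1) + 1 = lof (build x) c.val := by
      rw [hF, hlof, hbf]; omega
    apply Fin.ext
    rw [decode_val (build x) (build_Q x) c hcond, hF, hlof, hbf]
    omega


lemma card_choice : Nat.card (Choice n) = ∏ i ∈ Finset.range (n-1), (i+3) := by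
  unfold Choice
  rw [Nat.card_pi]
  have h1 : ∀ c : Fin (n-1), Nat.card (Fin (c.val + 3)) = c.val + 3 := by
    intro c
    rw [Nat.card_eq_fintype_card, Fintype.card_fin]
  rw [Finset.prod_congr rfl (fun c _ => h1 c)]
  exact Fin.prod_univ_eq_prod_range (fun i => i + 3) (n-1)

lemma arith : ∀ m : ℕ, 2 * ∏ i ∈ Finset.range m, (i+3) = (m+2).factorial := by
  intro m
  induction m with
  | zero => simp [Nat.factorial]
  | succ m ih =>
    rw [Finset.prod_range_succ, show m+1+2 = (m+2)+1 from rfl, Nat.factorial_succ, ← ih]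
    ring

end PF

/-- The number of parking functions of size `n` whose parking permutation avoids
both 132 and 231 equals `(n+1)!/2`. -/
theorem stmt15 (n : ℕ) (hn : 1 ≤ n) :
    2 * pk n [p132, p231] = (n + 1).factorial := by
  have hequiv : ∀ f : Fin n → Fin n,
      (IsParkingFunction f ∧ ∃ ρ : Equiv.Perm (Fin n), IsParkingPerm f ρ ∧
        AvoidsAll ρ [p132, p231]) ↔ PF.Q f := by
    intro f
    constructor
    · rintro ⟨-, ρ, hperm, hav⟩
      exact PF.mem_imp_Q hperm hav
    · intro hQ
      exact PF.Q_imp_mem hn hQ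
  have h1 : pk n [p132, p231] = Nat.card (PF.Choice n) := by
    unfold pk
    exact Nat.card_congr ((Equiv.subtypeEquivRight hequiv).trans
      ⟨fun fp => PF.decode fp.1 fp.2, fun x => ⟨PF.build x, PF.build_Q x⟩,
        fun fp => Subtype.ext (PF.build_decode fp.1 fp.2 hn),
        fun x => PF.decode_build x⟩)
  rw [h1, PF.card_choice, PF.arith (n-1), show n - 1 + 2 = n + 1 by omega]
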